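/- Let Q be an associative quasigroup and H a Q-graded Hopf quasigroup with associator δ(h,g,f) = ((h_{(1)}g_{(1)})f_{(1)})S_{pqr}(h_{(2)}(g_{(2)}f_{(2)})). Then δ(h_{(1)}, S_p(h_{(2)}), g) = ε_p(h)ε_q(g)1 for all h ∈ H_p, g ∈ H_q. -/

import Mathlib

open TensorProduct

universe u v w

set_option linter.unusedSectionVars false
set_option maxHeartbeats 1000000
set_option synthInstance.maxHeartbeats 1000000
open Coalgebra

namespace HQGcore

variable {k : Type*} [CommRing k] {C : Type*} [AddCommGroup C] [Module k C] [Coalgebra k C]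

lemma sum_bilin {W : Type*} [AddCommGroup W] [Module k W]
    (F : C →ₗ[k] C →ₗ[k] W) {a : C} {ι : Type*} (r : Coalgebra.Repr k a ι) :
    ∑ i ∈ r.index, F (r.left i) (r.right i) = TensorProduct.lift F (comul a) := by
  rw [← r.eq, map_sum]; simp

lemma sum_counitL {W : Type*} [AddCommGroup W] [Module k W]
    (F : C →ₗ[k] W) {a : C} {ι : Type*} (r : Coalgebra.Repr k a ι) :
    ∑ i ∈ r.index, counit (R := k) (r.left i) • F (r.right i) = F a := by
  have h := Coalgebra.sum_counit_tmul_eq (R := k) r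
  apply_fun (TensorProduct.lid k C) at h
  simp only [map_sum, TensorProduct.lid_tmul, TensorProduct.lid_symm_apply] at h
  calc ∑ i ∈ r.index, counit (R := k) (r.left i) • F (r.right i)
      = F (∑ i ∈ r.index, counit (R := k) (r.left i) • r.right i) := by
        rw [map_sum]; simp
    _ = F a := by rw [h, one_smul]

lemma sum_counitR {W : Type*} [AddCommGroup W] [Module k W]
    (F : C →ₗ[k] W) {a : C} {ι : Type*} (r : Coalgebra.Repr k a ι) :
    ∑ i ∈ r.index, counit (R := k) (r.right i) • F (r.left i) = F a := by
  have h := Coalgebra.sum_tmul_counit_eq (R := k) r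
  apply_fun (TensorProduct.rid k C) at h
  simp only [map_sum, TensorProduct.rid_tmul] at h
  calc ∑ i ∈ r.index, counit (R := k) (r.right i) • F (r.left i)
      = F (∑ i ∈ r.index, counit (R := k) (r.right i) • r.left i) := by
        rw [map_sum]; simp
    _ = F a := by rw [h, one_smul]

lemma shuffle3 {W : Type*} [AddCommGroup W] [Module k W]
    (ψ : C →ₗ[k] C →ₗ[k] C →ₗ[k] W) {a : C} {ι κ κ' : Type*} (r r' : Coalgebra.Repr k a ι)
    (rl : ∀ i : ι, Coalgebra.Repr k (r.left i) κ) (rr : ∀ i : ι, Coalgebra.Repr k (r'.right i) κ') :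
    ∑ i ∈ r.index, ∑ j ∈ (rl i).index,
      ψ ((rl i).left j) ((rl i).right j) (r.right i)
    = ∑ i ∈ r'.index, ∑ s ∈ (rr i).index,
      ψ (r'.left i) ((rr i).left s) ((rr i).right s) := by
  set N : C ⊗[k] (C ⊗[k] C) →ₗ[k] W :=
    TensorProduct.lift ((TensorProduct.lift.equiv (RingHom.id k) C C W).toLinearMap ∘ₗ ψ) with hN
  have hNa : TensorProduct.lift (TensorProduct.lift ψ)
      = N ∘ₗ (TensorProduct.assoc k C C C).toLinearMap := by
    apply TensorProduct.ext_threefold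
    intro x y z
    simp [hN]
  have hL : ∑ i ∈ r.index, ∑ j ∈ (rl i).index,
      ψ ((rl i).left j) ((rl i).right j) (r.right i)
      = TensorProduct.lift (TensorProduct.lift ψ)
          ((comul (R := k)).rTensor C (comul a)) := by
    rw [← r.eq, map_sum, map_sum]
    refine Finset.sum_congr rfl fun i _ => ?_
    rw [LinearMap.rTensor_tmul, ← (rl i).eq, TensorProduct.sum_tmul, map_sum]
    simp
  have hR : ∑ i ∈ r'.index, ∑ s ∈ (rr i).index,
      ψ (r'.left i) ((rr i).left s) ((rr i).right s)
      = N ((comul (R := k)).lTensor C (comul a)) := by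
    rw [← r'.eq, map_sum, map_sum]
    refine Finset.sum_congr rfl fun i _ => ?_
    rw [LinearMap.lTensor_tmul, ← (rr i).eq, TensorProduct.tmul_sum, map_sum]
    simp [hN]
  rw [hL, hR, hNa]
  simp only [LinearMap.comp_apply, LinearEquiv.coe_coe, Coalgebra.coassoc_apply]

section mul

variable (M : C →ₗ[k] C →ₗ[k] C) (S : C →ₗ[k] C) (e1 : C)

/-- componentwise multiplication on `C ⊗ C`. -/
noncomputable def m2 : (C ⊗[k] C) →ₗ[k] (C ⊗[k] C) →ₗ[k] (C ⊗[k] C) :=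
  TensorProduct.curry ((TensorProduct.map (TensorProduct.lift M) (TensorProduct.lift M)) ∘ₗ
    (TensorProduct.tensorTensorTensorComm k C C C C).toLinearMap)

@[simp] lemma m2_tmul (x y z w : C) :
    m2 M (x ⊗ₜ[k] y) (z ⊗ₜ[k] w) = M x z ⊗ₜ[k] M y w := by
  simp [m2]

lemma m2_one_r (hone_r : ∀ b : C, M b e1 = b) (t : C ⊗[k] C) :
    m2 M t (e1 ⊗ₜ[k] e1) = t := by
  induction t using TensorProduct.induction_on with
  | zero => simp
  | tmul x y => simp [hone_r]
  | add x y hx hy => simp [map_add, LinearMap.add_apply, hx, hy]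

/-- `x y z ↦ m2 (S x ⊗ S c) (Δ (M y (S z)))` -/
noncomputable def triA (c : C) : C →ₗ[k] C →ₗ[k] C →ₗ[k] (C ⊗[k] C) :=
  LinearMap.mk₂ k
    (fun x y => (m2 M (S x ⊗ₜ[k] S c)) ∘ₗ (comul (R := k)) ∘ₗ (M y) ∘ₗ S)
    (fun x₁ x₂ y => by ext z; simp [map_add, add_tmul, LinearMap.add_apply])
    (fun c' x y => by ext z; rw [LinearMap.comp_apply]; simp [← smul_tmul', map_smul, LinearMap.smul_apply])
    (fun x y₁ y₂ => by ext z; simp [map_add, LinearMap.add_apply])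
    (fun c' x y => by ext z; simp [map_smul, LinearMap.smul_apply])

@[simp] lemma triA_apply (c x y z : C) :
    triA M S c x y z = m2 M (S x ⊗ₜ[k] S c) (comul (R := k) (M y (S z))) := rfl

/-- `x y z ↦ (map ((M (S x)) ∘ (M y)) ((M (S c)) ∘ (M z))) w0` -/
noncomputable def triB (c : C) (w0 : C ⊗[k] C) : C →ₗ[k] C →ₗ[k] C →ₗ[k] (C ⊗[k] C) :=
  LinearMap.mk₂ k
    (fun x y => (LinearMap.applyₗ w0) ∘ₗ
      (TensorProduct.mapBilinear (RingHom.id k) C C C C ((M (S x)) ∘ₗ M y)) ∘ₗ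
      (LinearMap.llcomp k C C C (M (S c))) ∘ₗ M)
    (fun x₁ x₂ y => by
      ext z
      simp [map_add, LinearMap.add_apply, TensorProduct.map_add_left, LinearMap.add_comp])
    (fun c' x y => by
      ext z
      simp [map_smul, LinearMap.smul_apply, TensorProduct.map_smul_left, LinearMap.smul_comp])
    (fun x y₁ y₂ => by
      ext z
      simp [map_add, LinearMap.add_apply, TensorProduct.map_add_left, LinearMap.comp_add,
        LinearMap.add_comp])
    (fun c' x y => by
      ext z
      simp [map_smul, LinearMap.smul_apply, TensorProduct.map_smul_left, LinearMap.comp_smul,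
        LinearMap.smul_comp])

@[simp] lemma triB_apply (c : C) (w0 : C ⊗[k] C) (x y z : C) :
    triB M S c w0 x y z =
      (TensorProduct.map ((M (S x)) ∘ₗ M y) ((M (S c)) ∘ₗ M z)) w0 := rfl

/-- `x y z ↦ (lTensor ((M (S x)) ∘ (M y))) (Δ (S z))` -/
noncomputable def triC : C →ₗ[k] C →ₗ[k] C →ₗ[k] (C ⊗[k] C) :=
  LinearMap.mk₂ k
    (fun x y => (LinearMap.lTensor C ((M (S x)) ∘ₗ M y)) ∘ₗ (comul (R := k)) ∘ₗ S)
    (fun x₁ x₂ y => by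
      ext z
      simp [map_add, LinearMap.add_apply, LinearMap.lTensor_add, LinearMap.add_comp])
    (fun c' x y => by
      ext z
      simp [map_smul, LinearMap.smul_apply, LinearMap.lTensor_smul, LinearMap.smul_comp])
    (fun x y₁ y₂ => by
      ext z
      simp [map_add, LinearMap.add_apply, LinearMap.lTensor_add, LinearMap.comp_add,
        LinearMap.add_comp])
    (fun c' x y => by
      ext z
      simp [map_smul, LinearMap.smul_apply, LinearMap.lTensor_smul, LinearMap.comp_smul,
        LinearMap.smul_comp])

@[simp] lemma triC_apply (x y z : C) :
    triC M S x y z = (LinearMap.lTensor C ((M (S x)) ∘ₗ M y)) (comul (R := k) (S z)) := rfl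

/-- `x y ↦ S y ⊗ S x` -/
noncomputable def swS : C →ₗ[k] C →ₗ[k] (C ⊗[k] C) :=
  LinearMap.mk₂ k (fun x y => S y ⊗ₜ[k] S x)
    (fun x₁ x₂ y => by simp [map_add, tmul_add])
    (fun c x y => by simp [map_smul, tmul_smul])
    (fun x y₁ y₂ => by simp [map_add, add_tmul])
    (fun c x y => by simp [map_smul, smul_tmul'])

@[simp] lemma swS_apply (x y : C) : swS S x y = S y ⊗ₜ[k] S x := rfl

section hyps

variable (hone_r : ∀ b : C, M b e1 = b)
  (hcm : ∀ a b : C, comul (R := k) (M a b) = m2 M (comul a) (comul b))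
  (hc1 : comul (R := k) e1 = e1 ⊗ₜ[k] e1)
  (hax1 : ∀ (a g : C) (r : Coalgebra.Repr k a (C × C)),
    ∑ i ∈ r.index, M (S (r.left i)) (M (r.right i) g) = counit (R := k) a • g)
  (hS2 : ∀ (a : C) (r : Coalgebra.Repr k a (C × C)),
    ∑ i ∈ r.index, M (r.left i) (S (r.right i)) = counit (R := k) a • e1)

include hone_r hcm hc1 hS2 in
lemma innerA (c y : C) :
    (S y ⊗ₜ[k] S c : C ⊗[k] C)
    = ∑ s ∈ (ℛ k y).index, ∑ j ∈ (ℛ k ((ℛ k y).left s)).index,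
        triA M S c ((ℛ k ((ℛ k y).left s)).left j) ((ℛ k ((ℛ k y).left s)).right j)
          ((ℛ k y).right s) := by
  have h0 : (S y ⊗ₜ[k] S c : C ⊗[k] C)
      = ∑ s ∈ (ℛ k y).index,
          counit (R := k) ((ℛ k y).right s) • (S ((ℛ k y).left s) ⊗ₜ[k] S c) := by
    have h := sum_counitR (F := ((TensorProduct.mk k C C).flip (S c)) ∘ₗ S) (ℛ k y)
    simp only [LinearMap.comp_apply, LinearMap.flip_apply, TensorProduct.mk_apply] at h
    rw [h]
  rw [h0]
  have h1 : ∀ s ∈ (ℛ k y).index,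
      counit (R := k) ((ℛ k y).right s) • (S ((ℛ k y).left s) ⊗ₜ[k] S c)
      = ∑ w ∈ (ℛ k ((ℛ k y).right s)).index,
          triA M S c ((ℛ k y).left s)
            ((ℛ k ((ℛ k y).right s)).left w) ((ℛ k ((ℛ k y).right s)).right w) := by
    intro s _
    have hsc : ∀ (co : k) (t : C ⊗[k] C), co • t = m2 M t (comul (R := k) (co • e1)) := by
      intro co t
      rw [map_smul, hc1, map_smul, m2_one_r M e1 hone_r]
    rw [hsc, ← hS2 ((ℛ k y).right s) (ℛ k ((ℛ k y).right s)), map_sum, map_sum]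
    exact Finset.sum_congr rfl fun w _ => by simp
  rw [Finset.sum_congr rfl h1]
  exact (shuffle3 (triA M S c) (ℛ k y) (ℛ k y)
    (fun s => ℛ k ((ℛ k y).left s)) (fun s => ℛ k ((ℛ k y).right s))).symm


include hcm hax1 in
lemma innerC (x y : C) :
    ∑ j ∈ (ℛ k x).index, triC M S ((ℛ k x).left j) ((ℛ k x).right j) y
    = counit (R := k) x • comul (R := k) (S y) := by
  simp only [triC_apply]
  rw [← (ℛ k (S y)).eq]
  simp only [map_sum, LinearMap.lTensor_tmul, LinearMap.comp_apply]
  rw [Finset.sum_comm, Finset.smul_sum]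
  refine Finset.sum_congr rfl fun m' _ => ?_
  rw [← TensorProduct.tmul_sum, hax1 _ _ (ℛ k x), tmul_smul]

include hcm hax1 in
lemma innerBfull (c x y : C) :
    ∑ j ∈ (ℛ k x).index, triA M S c ((ℛ k x).left j) ((ℛ k x).right j) y
    = triC M S c x y := by
  have step1 : ∀ j ∈ (ℛ k x).index,
      triA M S c ((ℛ k x).left j) ((ℛ k x).right j) y
      = ∑ n ∈ (ℛ k ((ℛ k x).right j)).index,
          triB M S c (comul (R := k) (S y)) ((ℛ k x).left j)
            ((ℛ k ((ℛ k x).right j)).left n) ((ℛ k ((ℛ k x).right j)).right n) := by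
    intro j _
    rw [triA_apply, hcm, ← (ℛ k ((ℛ k x).right j)).eq, map_sum, LinearMap.sum_apply, map_sum]
    refine Finset.sum_congr rfl fun n _ => ?_
    rw [triB_apply]
    generalize comul (R := k) (S y) = t
    induction t using TensorProduct.induction_on with
    | zero => simp
    | tmul u v => simp
    | add t₁ t₂ h₁ h₂ => simp only [map_add, h₁, h₂]
  rw [Finset.sum_congr rfl step1]
  rw [← shuffle3 (triB M S c (comul (R := k) (S y))) (ℛ k x) (ℛ k x)
        (fun j => ℛ k ((ℛ k x).left j)) (fun j => ℛ k ((ℛ k x).right j))]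
  have step3 : ∀ j ∈ (ℛ k x).index,
      ∑ n ∈ (ℛ k ((ℛ k x).left j)).index,
        triB M S c (comul (R := k) (S y)) ((ℛ k ((ℛ k x).left j)).left n)
          ((ℛ k ((ℛ k x).left j)).right n) ((ℛ k x).right j)
      = counit (R := k) ((ℛ k x).left j) •
          ∑ m' ∈ (ℛ k (S y)).index,
            (ℛ k (S y)).left m' ⊗ₜ[k]
              (M (S c) (M ((ℛ k x).right j) ((ℛ k (S y)).right m'))) := by
    intro j _
    rw [← (ℛ k (S y)).eq]
    simp only [triB_apply, map_sum, TensorProduct.map_tmul, LinearMap.comp_apply]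
    rw [Finset.sum_comm, Finset.smul_sum]
    refine Finset.sum_congr rfl fun m' _ => ?_
    rw [← TensorProduct.sum_tmul, hax1 _ _ (ℛ k ((ℛ k x).left j)), smul_tmul']
  rw [Finset.sum_congr rfl step3]
  have step4 := sum_counitL (F := ∑ m' ∈ (ℛ k (S y)).index,
      ((TensorProduct.mk k C C ((ℛ k (S y)).left m')) ∘ₗ (M (S c)) ∘ₗ
        (M.flip ((ℛ k (S y)).right m')))) (ℛ k x)
  simp only [LinearMap.coe_sum, Finset.sum_apply, LinearMap.comp_apply,
    LinearMap.flip_apply, TensorProduct.mk_apply] at step4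
  rw [step4, triC_apply, ← (ℛ k (S y)).eq, map_sum]
  simp

lemma sum_swS (b : C) {ι : Type*} (r : Coalgebra.Repr k b ι) :
    (∑ i ∈ r.index, S (r.right i) ⊗ₜ[k] S (r.left i))
    = TensorProduct.lift (swS S) (comul b) := by
  rw [← sum_bilin (swS S) r]
  exact Finset.sum_congr rfl fun i _ => by simp

include hone_r hcm hc1 hax1 hS2 in
lemma anticomul (b : C) {ι : Type*} (r0 : Coalgebra.Repr k b ι) :
    comul (R := k) (S b) = ∑ i ∈ r0.index, S (r0.right i) ⊗ₜ[k] S (r0.left i) := by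
  rw [sum_swS S b r0, ← sum_swS S b (ℛ k b)]
  calc comul (R := k) (S b)
      = ∑ i ∈ (ℛ k b).index,
          counit (R := k) ((ℛ k b).left i) • comul (R := k) (S ((ℛ k b).right i)) := by
        have h := sum_counitL (F := (comul (R := k)) ∘ₗ S) (ℛ k b)
        simp only [LinearMap.comp_apply] at h
        rw [h]
    _ = ∑ i ∈ (ℛ k b).index, ∑ j ∈ (ℛ k ((ℛ k b).left i)).index,
          triC M S ((ℛ k ((ℛ k b).left i)).left j) ((ℛ k ((ℛ k b).left i)).right j)
            ((ℛ k b).right i) :=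
        Finset.sum_congr rfl fun i _ =>
          (innerC M S hcm hax1 ((ℛ k b).left i) ((ℛ k b).right i)).symm
    _ = ∑ i ∈ (ℛ k b).index, ∑ s ∈ (ℛ k ((ℛ k b).right i)).index,
          triC M S ((ℛ k b).left i) ((ℛ k ((ℛ k b).right i)).left s)
            ((ℛ k ((ℛ k b).right i)).right s) :=
        shuffle3 (triC M S) (ℛ k b) (ℛ k b)
          (fun i => ℛ k ((ℛ k b).left i)) (fun i => ℛ k ((ℛ k b).right i))
    _ = ∑ i ∈ (ℛ k b).index, ∑ s ∈ (ℛ k ((ℛ k b).right i)).index,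
          ∑ j ∈ (ℛ k ((ℛ k ((ℛ k b).right i)).left s)).index,
            triA M S ((ℛ k b).left i)
              ((ℛ k ((ℛ k ((ℛ k b).right i)).left s)).left j)
              ((ℛ k ((ℛ k ((ℛ k b).right i)).left s)).right j)
              ((ℛ k ((ℛ k b).right i)).right s) :=
        Finset.sum_congr rfl fun i _ => Finset.sum_congr rfl fun s _ =>
          (innerBfull M S hcm hax1 ((ℛ k b).left i)
            ((ℛ k ((ℛ k b).right i)).left s) ((ℛ k ((ℛ k b).right i)).right s)).symm
    _ = ∑ i ∈ (ℛ k b).index, S ((ℛ k b).right i) ⊗ₜ[k] S ((ℛ k b).left i) :=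
        Finset.sum_congr rfl fun i _ =>
          (innerA M S e1 hone_r hcm hc1 hS2 ((ℛ k b).left i) ((ℛ k b).right i)).symm

end hyps

end mul

lemma liftAdd {W : Type*} [AddCommGroup W] [Module k W] (F G : C →ₗ[k] C →ₗ[k] W) :
    TensorProduct.lift (F + G) = TensorProduct.lift F + TensorProduct.lift G := by
  apply TensorProduct.ext'; intro x y; simp

lemma liftSmul {W : Type*} [AddCommGroup W] [Module k W] (c : k) (F : C →ₗ[k] C →ₗ[k] W) :
    TensorProduct.lift (c • F) = c • TensorProduct.lift F := by
  apply TensorProduct.ext'; intro x y; simp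

section mul2

variable (M : C →ₗ[k] C →ₗ[k] C) (S : C →ₗ[k] C) (e1 : C)

/-- `u₁ u₂ ↦ M (M (M p u₁) g1) (S (M q (M u₂ g2)))` -/
noncomputable def bilinG (p q g1 g2 : C) : C →ₗ[k] C →ₗ[k] C :=
  LinearMap.mk₂ k (fun u1 u2 => M (M (M p u1) g1) (S (M q (M u2 g2))))
    (fun x₁ x₂ y => by simp [map_add, LinearMap.add_apply])
    (fun c x y => by simp [map_smul, LinearMap.smul_apply])
    (fun x y₁ y₂ => by simp [map_add, LinearMap.add_apply])
    (fun c x y => by simp [map_smul, LinearMap.smul_apply])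

@[simp] lemma bilinG_apply (p q g1 g2 u1 u2 : C) :
    bilinG M S p q g1 g2 u1 u2 = M (M (M p u1) g1) (S (M q (M u2 g2))) := rfl

/-- `α β ↦ M (M (M x (S β)) g1) (S (M y (M (S α) g2)))` -/
noncomputable def bilinH (x y g1 g2 : C) : C →ₗ[k] C →ₗ[k] C :=
  LinearMap.mk₂ k (fun α β => M (M (M x (S β)) g1) (S (M y (M (S α) g2))))
    (fun x₁ x₂ y' => by simp [map_add, LinearMap.add_apply])
    (fun c x' y' => by simp [map_smul, LinearMap.smul_apply])
    (fun x' y₁ y₂ => by simp [map_add, LinearMap.add_apply])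
    (fun c x' y' => by simp [map_smul, LinearMap.smul_apply])

@[simp] lemma bilinH_apply (x y g1 g2 α β : C) :
    bilinH M S x y g1 g2 α β = M (M (M x (S β)) g1) (S (M y (M (S α) g2))) := rfl

lemma bilinH_add₁ (x₁ x₂ y g1 g2 : C) :
    bilinH M S (x₁ + x₂) y g1 g2 = bilinH M S x₁ y g1 g2 + bilinH M S x₂ y g1 g2 := by
  ext α β; simp [map_add, LinearMap.add_apply]

lemma bilinH_smul₁ (c : k) (x y g1 g2 : C) :
    bilinH M S (c • x) y g1 g2 = c • bilinH M S x y g1 g2 := by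
  ext α β; simp [map_smul, LinearMap.smul_apply]

lemma bilinH_add₂ (x y₁ y₂ g1 g2 : C) :
    bilinH M S x (y₁ + y₂) g1 g2 = bilinH M S x y₁ g1 g2 + bilinH M S x y₂ g1 g2 := by
  ext α β; simp [map_add, LinearMap.add_apply]

lemma bilinH_smul₂ (c : k) (x y g1 g2 : C) :
    bilinH M S x (c • y) g1 g2 = c • bilinH M S x y g1 g2 := by
  ext α β; simp [map_smul, LinearMap.smul_apply]

/-- `x y z ↦ lift (bilinH x y g1 g2) (Δ z)` -/
noncomputable def triH (g1 g2 : C) : C →ₗ[k] C →ₗ[k] C →ₗ[k] C :=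
  LinearMap.mk₂ k (fun x y => (TensorProduct.lift (bilinH M S x y g1 g2)) ∘ₗ (comul (R := k)))
    (fun x₁ x₂ y => by beta_reduce; rw [bilinH_add₁, liftAdd]; ext z; simp)
    (fun c x y => by beta_reduce; rw [bilinH_smul₁, liftSmul]; ext z; simp)
    (fun x y₁ y₂ => by beta_reduce; rw [bilinH_add₂, liftAdd]; ext z; simp)
    (fun c x y => by beta_reduce; rw [bilinH_smul₂, liftSmul]; ext z; simp)

@[simp] lemma triH_apply (g1 g2 x y z : C) :
    triH M S g1 g2 x y z = TensorProduct.lift (bilinH M S x y g1 g2) (comul (R := k) z) := rfl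

/-- `x y z ↦ M (M (M c (S z)) g1) (S (M x (M (S y) g2)))` -/
noncomputable def triE (c g1 g2 : C) : C →ₗ[k] C →ₗ[k] C →ₗ[k] C :=
  LinearMap.mk₂ k
    (fun x y => (M.flip (S (M x (M (S y) g2)))) ∘ₗ (M.flip g1) ∘ₗ (M c) ∘ₗ S)
    (fun x₁ x₂ y => by ext z; simp [map_add, LinearMap.add_apply])
    (fun c' x y => by ext z; simp [map_smul, LinearMap.smul_apply])
    (fun x y₁ y₂ => by ext z; simp [map_add, LinearMap.add_apply])
    (fun c' x y => by ext z; simp [map_smul, LinearMap.smul_apply])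

@[simp] lemma triE_apply (c g1 g2 x y z : C) :
    triE M S c g1 g2 x y z = M (M (M c (S z)) g1) (S (M x (M (S y) g2))) := rfl

section hyps2

variable (hone_r : ∀ b : C, M b e1 = b)
  (hone_l : ∀ b : C, M e1 b = b)
  (hcm : ∀ a b : C, comul (R := k) (M a b) = m2 M (comul a) (comul b))
  (hc1 : comul (R := k) e1 = e1 ⊗ₜ[k] e1)
  (hax1 : ∀ (a g : C) (r : Coalgebra.Repr k a (C × C)),
    ∑ i ∈ r.index, M (S (r.left i)) (M (r.right i) g) = counit (R := k) a • g)
  (hax2 : ∀ (a g : C) (r : Coalgebra.Repr k a (C × C)),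
    ∑ i ∈ r.index, M (r.left i) (M (S (r.right i)) g) = counit (R := k) a • g)
  (hS2 : ∀ (a : C) (r : Coalgebra.Repr k a (C × C)),
    ∑ i ∈ r.index, M (r.left i) (S (r.right i)) = counit (R := k) a • e1)

include hone_r hone_l hcm hc1 hax1 hax2 hS2 in
lemma main_core (a g : C) {ι κ₁ κ₂ κ₃ : Type*} (r : Coalgebra.Repr k a ι)
    (rl : ∀ i : ι, Coalgebra.Repr k (r.left i) κ₁)
    (ru : ∀ i : ι, Coalgebra.Repr k (S (r.right i)) κ₂) (rg : Coalgebra.Repr k g κ₃) :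
    ∑ i ∈ r.index, ∑ j ∈ (rl i).index, ∑ s ∈ (ru i).index, ∑ t ∈ rg.index,
      M (M (M ((rl i).left j) ((ru i).left s)) (rg.left t))
        (S (M ((rl i).right j) (M ((ru i).right s) (rg.right t))))
    = (counit (R := k) a * counit (R := k) g) • e1 := by
  have step1 : ∀ i ∈ r.index, ∀ j ∈ (rl i).index,
      ∑ s ∈ (ru i).index, ∑ t ∈ rg.index,
        M (M (M ((rl i).left j) ((ru i).left s)) (rg.left t))
          (S (M ((rl i).right j) (M ((ru i).right s) (rg.right t))))
      = (∑ t ∈ rg.index, triH M S (rg.left t) (rg.right t))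
          ((rl i).left j) ((rl i).right j) (r.right i) := by
    intro i _ j _
    rw [Finset.sum_comm]
    have hfin : ∀ t ∈ rg.index,
        ∑ s ∈ (ru i).index,
          M (M (M ((rl i).left j) ((ru i).left s)) (rg.left t))
            (S (M ((rl i).right j) (M ((ru i).right s) (rg.right t))))
        = triH M S (rg.left t) (rg.right t) ((rl i).left j) ((rl i).right j) (r.right i) := by
      intro t _
      have h := sum_bilin
        (bilinG M S ((rl i).left j) ((rl i).right j) (rg.left t) (rg.right t)) (ru i)
      simp only [bilinG_apply] at h
      rw [h, anticomul M S e1 hone_r hcm hc1 hax1 hS2 (r.right i) (ℛ k (r.right i)), map_sum,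
        triH_apply, ← (ℛ k (r.right i)).eq, map_sum]
      exact Finset.sum_congr rfl fun s _ => by simp
    rw [Finset.sum_congr rfl hfin]
    simp
  calc ∑ i ∈ r.index, ∑ j ∈ (rl i).index, ∑ s ∈ (ru i).index, ∑ t ∈ rg.index,
        M (M (M ((rl i).left j) ((ru i).left s)) (rg.left t))
          (S (M ((rl i).right j) (M ((ru i).right s) (rg.right t))))
      = ∑ i ∈ r.index, ∑ j ∈ (rl i).index,
          (∑ t ∈ rg.index, triH M S (rg.left t) (rg.right t))
            ((rl i).left j) ((rl i).right j) (r.right i) :=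
        Finset.sum_congr rfl fun i hi => Finset.sum_congr rfl fun j hj => step1 i hi j hj
    _ = ∑ i ∈ r.index, ∑ s ∈ (ℛ k (r.right i)).index,
          (∑ t ∈ rg.index, triH M S (rg.left t) (rg.right t))
            (r.left i) ((ℛ k (r.right i)).left s) ((ℛ k (r.right i)).right s) :=
        shuffle3 _ r r rl (fun i => ℛ k (r.right i))
    _ = ∑ i ∈ r.index, ∑ s ∈ (ℛ k (r.right i)).index,
          ∑ w ∈ (ℛ k ((ℛ k (r.right i)).right s)).index,
            (∑ t ∈ rg.index, triE M S (r.left i) (rg.left t) (rg.right t))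
              ((ℛ k (r.right i)).left s)
              ((ℛ k ((ℛ k (r.right i)).right s)).left w)
              ((ℛ k ((ℛ k (r.right i)).right s)).right w) := by
        refine Finset.sum_congr rfl fun i _ => Finset.sum_congr rfl fun s _ => ?_
        have hunf : ∀ t ∈ rg.index,
            triH M S (rg.left t) (rg.right t)
              (r.left i) ((ℛ k (r.right i)).left s) ((ℛ k (r.right i)).right s)
            = ∑ w ∈ (ℛ k ((ℛ k (r.right i)).right s)).index,
                triE M S (r.left i) (rg.left t) (rg.right t)
                  ((ℛ k (r.right i)).left s)
                  ((ℛ k ((ℛ k (r.right i)).right s)).left w)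
                  ((ℛ k ((ℛ k (r.right i)).right s)).right w) := by
          intro t _
          rw [triH_apply, ← (ℛ k ((ℛ k (r.right i)).right s)).eq, map_sum]
          exact Finset.sum_congr rfl fun w _ => by simp
        simp only [LinearMap.coe_sum, Finset.sum_apply, LinearMap.sum_apply]
        rw [Finset.sum_congr rfl hunf, Finset.sum_comm]
    _ = ∑ i ∈ r.index, ∑ s ∈ (ℛ k (r.right i)).index,
          ∑ j' ∈ (ℛ k ((ℛ k (r.right i)).left s)).index,
            (∑ t ∈ rg.index, triE M S (r.left i) (rg.left t) (rg.right t))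
              ((ℛ k ((ℛ k (r.right i)).left s)).left j')
              ((ℛ k ((ℛ k (r.right i)).left s)).right j')
              ((ℛ k (r.right i)).right s) :=
        Finset.sum_congr rfl fun i _ =>
          (shuffle3 _ (ℛ k (r.right i)) (ℛ k (r.right i))
            (fun s => ℛ k ((ℛ k (r.right i)).left s))
            (fun s => ℛ k ((ℛ k (r.right i)).right s))).symm
    _ = ∑ i ∈ r.index, ∑ s ∈ (ℛ k (r.right i)).index,
          counit (R := k) ((ℛ k (r.right i)).left s) •
            ∑ t ∈ rg.index,
              M (M (M (r.left i) (S ((ℛ k (r.right i)).right s))) (rg.left t))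
                (S (rg.right t)) := by
        refine Finset.sum_congr rfl fun i _ => Finset.sum_congr rfl fun s _ => ?_
        simp only [LinearMap.coe_sum, Finset.sum_apply, LinearMap.sum_apply, triE_apply]
        rw [Finset.sum_comm, Finset.smul_sum]
        refine Finset.sum_congr rfl fun t _ => ?_
        rw [← map_sum, ← map_sum, hax2 _ _ (ℛ k ((ℛ k (r.right i)).left s)), map_smul, map_smul]
    _ = ∑ i ∈ r.index, ∑ t ∈ rg.index,
          M (M (M (r.left i) (S (r.right i))) (rg.left t)) (S (rg.right t)) := by
        refine Finset.sum_congr rfl fun i _ => ?_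
        have h := sum_counitL (F := ∑ t ∈ rg.index,
            (M.flip (S (rg.right t))) ∘ₗ (M.flip (rg.left t)) ∘ₗ (M (r.left i)) ∘ₗ S)
          (ℛ k (r.right i))
        simpa only [LinearMap.coe_sum, Finset.sum_apply, LinearMap.comp_apply,
          LinearMap.flip_apply, Finset.smul_sum] using h
    _ = ∑ t ∈ rg.index, counit (R := k) a • M (rg.left t) (S (rg.right t)) := by
        rw [Finset.sum_comm]
        refine Finset.sum_congr rfl fun t _ => ?_
        have h : ∑ i ∈ r.index,
            M (M (M (r.left i) (S (r.right i))) (rg.left t)) (S (rg.right t))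
            = M (M (∑ i ∈ r.index, M (r.left i) (S (r.right i))) (rg.left t))
                (S (rg.right t)) := by
          rw [map_sum, LinearMap.sum_apply, map_sum, LinearMap.sum_apply]
        have hconv : ∑ i ∈ r.index, M (r.left i) (S (r.right i))
            = ∑ i ∈ (ℛ k a).index, M ((ℛ k a).left i) (S ((ℛ k a).right i)) := by
          have h1 := sum_bilin (M.compl₂ S) r
          have h2 := sum_bilin (M.compl₂ S) (ℛ k a)
          simp only [LinearMap.compl₂_apply] at h1 h2
          rw [h1, h2]
        rw [h, hconv, hS2 a (ℛ k a), map_smul, LinearMap.smul_apply, map_smul,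
          LinearMap.smul_apply, hone_l]
    _ = (counit (R := k) a * counit (R := k) g) • e1 := by
        rw [← Finset.smul_sum]
        have hconv : ∑ t ∈ rg.index, M (rg.left t) (S (rg.right t))
            = ∑ t ∈ (ℛ k g).index, M ((ℛ k g).left t) (S ((ℛ k g).right t)) := by
          have h1 := sum_bilin (M.compl₂ S) rg
          have h2 := sum_bilin (M.compl₂ S) (ℛ k g)
          simp only [LinearMap.compl₂_apply] at h1 h2
          rw [h1, h2]
        rw [hconv, hS2 g (ℛ k g), smul_smul]

end hyps2

end mul2

end HQGcore

/-- A quasigroup: a set with product, identity `e`, and two-sided inverses satisfying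
`p⁻¹(pq) = q` and `(qp)p⁻¹ = q`. -/
structure QuasigroupStruct (Q : Type u) where
  mul : Q → Q → Q
  one : Q
  inv : Q → Q
  mul_one : ∀ p, mul p one = p
  one_mul : ∀ p, mul one p = p
  inv_mul_cancel : ∀ p q, mul (inv p) (mul p q) = q
  mul_inv_cancel : ∀ p q, mul (mul q p) (inv p) = q

namespace QuasigroupStruct

variable {Q : Type u} (G : QuasigroupStruct Q)

lemma inv_mul_self (p : Q) : G.mul (G.inv p) p = G.one := by
  have h := G.inv_mul_cancel p G.one
  rwa [G.mul_one] at h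

lemma mul_inv_self (p : Q) : G.mul p (G.inv p) = G.one := by
  have h := G.mul_inv_cancel p G.one
  rwa [G.one_mul] at h

lemma inv_inv (p : Q) : G.inv (G.inv p) = p := by
  have h := G.inv_mul_cancel (G.inv p) p
  rw [G.inv_mul_self p] at h
  rwa [G.mul_one] at h

lemma mul_inv_cancel_left (p q : Q) : G.mul p (G.mul (G.inv p) q) = q := by
  have h := G.inv_mul_cancel (G.inv p) q
  rwa [G.inv_inv] at h

lemma inv_mul_cancel_right (p q : Q) : G.mul (G.mul q (G.inv p)) p = q := by
  have h := G.mul_inv_cancel (G.inv p) q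
  rwa [G.inv_inv] at h

lemma mul_inv_rev (p q : Q) : G.inv (G.mul p q) = G.mul (G.inv q) (G.inv p) := by
  have h1 : G.mul q (G.inv (G.mul p q)) = G.inv p := by
    have h := G.mul_inv_cancel (G.mul p q) (G.inv p)
    rwa [G.inv_mul_cancel p q] at h
  calc G.inv (G.mul p q)
      = G.mul (G.inv q) (G.mul q (G.inv (G.mul p q))) := (G.inv_mul_cancel q _).symm
    _ = G.mul (G.inv q) (G.inv p) := by rw [h1]

lemma inv_one : G.inv G.one = G.one := by
  have h := G.inv_mul_cancel G.one G.one
  rwa [G.one_mul, G.mul_one] at h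

end QuasigroupStruct

/-- Transport along an equality of grades, as a linear map. -/
def gcl {Q : Type u} {H : Q → Type w} {k : Type v} [CommSemiring k]
    [∀ p, AddCommMonoid (H p)] [∀ p, Module k (H p)] {p q : Q} (e : p = q) :
    H p →ₗ[k] H q := by subst e; exact LinearMap.id

/-- A `Q`-graded Hopf quasigroup: a family of coassociative counital coalgebras `H p`
with a (not necessarily associative) graded multiplication, unit and antipode family,
such that the multiplications and the unit are coalgebra maps and the antipode
satisfies the Hopf quasigroup axioms. -/
structure GradedHopfQuasigroup (k : Type v) [CommRing k] {Q : Type u} (G : QuasigroupStruct Q)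
    (H : Q → Type w) [∀ p, AddCommGroup (H p)] [∀ p, Module k (H p)]
    [∀ p, Coalgebra k (H p)] where
  mul : ∀ p q, H p →ₗ[k] H q →ₗ[k] H (G.mul p q)
  one : H G.one
  antipode : ∀ p, H p →ₗ[k] H (G.inv p)
  mul_one' : ∀ (p : Q) (h : H p), gcl (k := k) (G.mul_one p) ((mul p G.one h) one) = h
  one_mul' : ∀ (p : Q) (h : H p), gcl (k := k) (G.one_mul p) ((mul G.one p one) h) = h
  comul_mul : ∀ (p q : Q) (h : H p) (g : H q),
    Coalgebra.comul (R := k) ((mul p q h) g) =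
      (TensorProduct.map (TensorProduct.lift (mul p q)) (TensorProduct.lift (mul p q)))
        ((TensorProduct.tensorTensorTensorComm k (H p) (H p) (H q) (H q))
          (Coalgebra.comul h ⊗ₜ[k] Coalgebra.comul g))
  counit_mul : ∀ (p q : Q) (h : H p) (g : H q),
    Coalgebra.counit (R := k) ((mul p q h) g) =
      Coalgebra.counit (R := k) h * Coalgebra.counit (R := k) g
  comul_one : Coalgebra.comul (R := k) one = one ⊗ₜ[k] one
  counit_one : Coalgebra.counit (R := k) one = 1
  /-- `S (h₁) (h₂ g) = ε(h) g` -/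
  antipode_mul_left : ∀ (p q : Q) (h : H p) (g : H q),
    TensorProduct.lift
      (((mul (G.inv p) (G.mul p q)).comp (antipode p)).compl₂ ((mul p q).flip g))
      (Coalgebra.comul h)
      = gcl (k := k) (G.inv_mul_cancel p q).symm (Coalgebra.counit (R := k) h • g)
  /-- `h₁ (S (h₂) g) = ε(h) g` -/
  antipode_mul_left' : ∀ (p q : Q) (h : H p) (g : H q),
    TensorProduct.lift
      ((mul p (G.mul (G.inv p) q)).compl₂ (((mul (G.inv p) q).flip g).comp (antipode p)))
      (Coalgebra.comul h)
      = gcl (k := k) (G.mul_inv_cancel_left p q).symm (Coalgebra.counit (R := k) h • g)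
  /-- `(g S (h₁)) h₂ = ε(h) g` -/
  antipode_mul_right : ∀ (p q : Q) (h : H p) (g : H q),
    TensorProduct.lift
      ((mul (G.mul q (G.inv p)) p).comp ((mul q (G.inv p) g).comp (antipode p)))
      (Coalgebra.comul h)
      = gcl (k := k) (G.inv_mul_cancel_right p q).symm (Coalgebra.counit (R := k) h • g)
  /-- `(g h₁) S (h₂) = ε(h) g` -/
  antipode_mul_right' : ∀ (p q : Q) (h : H p) (g : H q),
    TensorProduct.lift
      (((mul (G.mul q p) (G.inv p)).comp (mul q p g)).compl₂ (antipode p))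
      (Coalgebra.comul h)
      = gcl (k := k) (G.mul_inv_cancel p q).symm (Coalgebra.counit (R := k) h • g)

variable {k : Type v} [Field k] {Q : Type u} {G : QuasigroupStruct Q}
  {H : Q → Type w} [∀ p, AddCommGroup (H p)] [∀ p, Module k (H p)]
  [∀ p, Coalgebra k (H p)]

variable (A : GradedHopfQuasigroup k G H)

/-- Uncurried graded multiplication. -/
noncomputable def mm (p q : Q) : H p ⊗[k] H q →ₗ[k] H (G.mul p q) :=
  TensorProduct.lift (A.mul p q)

/-- `h ⊗ (g ⊗ f) ↦ (hg)f`. -/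
noncomputable def mulLeft (p q r : Q) :
    H p ⊗[k] (H q ⊗[k] H r) →ₗ[k] H (G.mul (G.mul p q) r) :=
  (mm A (G.mul p q) r) ∘ₗ
    (TensorProduct.map (mm A p q) LinearMap.id) ∘ₗ
      (TensorProduct.assoc k (H p) (H q) (H r)).symm.toLinearMap

/-- `h ⊗ (g ⊗ f) ↦ h(gf)`. -/
noncomputable def mulRight (p q r : Q) :
    H p ⊗[k] (H q ⊗[k] H r) →ₗ[k] H (G.mul p (G.mul q r)) :=
  (mm A p (G.mul q r)) ∘ₗ LinearMap.lTensor (H p) (mm A q r)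

/-- `h ⊗ (g ⊗ f) ↦ Δh ⊗ (Δg ⊗ Δf)`, rearranged into
`(h₁ ⊗ (g₁ ⊗ f₁)) ⊗ (h₂ ⊗ (g₂ ⊗ f₂))`. -/
noncomputable def comul3 (p q r : Q) :
    H p ⊗[k] (H q ⊗[k] H r) →ₗ[k]
      (H p ⊗[k] (H q ⊗[k] H r)) ⊗[k] (H p ⊗[k] (H q ⊗[k] H r)) :=
  (TensorProduct.tensorTensorTensorComm k (H p) (H p)
      (H q ⊗[k] H r) (H q ⊗[k] H r)).toLinearMap ∘ₗ
    (LinearMap.lTensor (H p ⊗[k] H p)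
      (TensorProduct.tensorTensorTensorComm k (H q) (H q) (H r) (H r)).toLinearMap) ∘ₗ
      (TensorProduct.map (Coalgebra.comul (R := k))
        (TensorProduct.map (Coalgebra.comul (R := k)) (Coalgebra.comul (R := k))))

/-- Uncurry a trilinear map. -/
noncomputable def uncurry3 {P : Type w}
    [AddCommGroup P] [Module k P]
    {X Y Z : Type w} [AddCommGroup X] [Module k X] [AddCommGroup Y] [Module k Y]
    [AddCommGroup Z] [Module k Z]
    (f : X →ₗ[k] Y →ₗ[k] Z →ₗ[k] P) : X ⊗[k] (Y ⊗[k] Z) →ₗ[k] P :=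
  TensorProduct.lift ((TensorProduct.lift.equiv (RingHom.id k) Y Z P).toLinearMap ∘ₗ f)

/-- The associator `δ(h,g,f) = ((h₁g₁)f₁) S((h₂(g₂f₂)))`, valued in `H e`. -/
noncomputable def delta0
    (hassoc : ∀ a b c, G.mul (G.mul a b) c = G.mul a (G.mul b c)) (p q r : Q) :
    H p →ₗ[k] H q →ₗ[k] H r →ₗ[k] H G.one :=
  (TensorProduct.lcurry (RingHom.id k) (H q) (H r) (H G.one)) ∘ₗ
    TensorProduct.curry
      ((gcl (k := k) (show G.mul (G.mul (G.mul p q) r)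
            (G.inv (G.mul p (G.mul q r))) = G.one by
          rw [hassoc p q r]; exact G.mul_inv_self _)) ∘ₗ
        (mm A (G.mul (G.mul p q) r) (G.inv (G.mul p (G.mul q r)))) ∘ₗ
          (TensorProduct.map (mulLeft A p q r)
            ((A.antipode (G.mul p (G.mul q r))) ∘ₗ mulRight A p q r)) ∘ₗ
            comul3 p q r)

/-- `δ'` is an associator for `H` :
`(hg)f = δ'(h₁,g₁,f₁) (h₂(g₂f₂))`. -/
noncomputable def IsAssociator
    (hassoc : ∀ a b c, G.mul (G.mul a b) c = G.mul a (G.mul b c))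
    (δ' : ∀ p q r : Q, H p →ₗ[k] H q →ₗ[k] H r →ₗ[k] H G.one) : Prop :=
  ∀ (p q r : Q) (x : H p ⊗[k] (H q ⊗[k] H r)),
    mulLeft A p q r x
      = gcl (k := k) (show G.mul G.one (G.mul p (G.mul q r))
            = G.mul (G.mul p q) r by rw [G.one_mul, hassoc p q r])
          ((mm A G.one (G.mul p (G.mul q r)))
            ((TensorProduct.map (uncurry3 (δ' p q r)) (mulRight A p q r))
              (comul3 p q r x)))

section Transfer

open Coalgebra HQGcore

variable [DecidableEq Q]

lemma single_gcl {p q : Q} (e : p = q) (x : H p) :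
    DFinsupp.single q (gcl (k := k) (H := H) e x) = DFinsupp.single p x := by
  subst e; rfl

lemma gcl_cancel {p q : Q} (e : p = q) (x : H p) :
    gcl (k := k) (H := H) e.symm (gcl (k := k) (H := H) e x) = x := by
  subst e; rfl

/-- multiplication on the direct sum -/
noncomputable def MB : (Π₀ p, H p) →ₗ[k] (Π₀ p, H p) →ₗ[k] (Π₀ p, H p) :=
  DFinsupp.lsum k fun p =>
    (DFinsupp.lsum k fun q =>
      ((A.mul p q).compr₂ (DFinsupp.lsingle (G.mul p q))).flip).flip

@[simp] lemma MB_single {p q : Q} (x : H p) (y : H q) :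
    MB A (DFinsupp.single p x) (DFinsupp.single q y)
      = DFinsupp.single (G.mul p q) (A.mul p q x y) := by
  simp [MB, DFinsupp.lsum_single]

/-- antipode on the direct sum -/
noncomputable def SB : (Π₀ p, H p) →ₗ[k] (Π₀ p, H p) :=
  DFinsupp.lsum k fun p => (DFinsupp.lsingle (G.inv p)) ∘ₗ A.antipode p

@[simp] lemma SB_single {p : Q} (x : H p) :
    SB A (DFinsupp.single p x) = DFinsupp.single (G.inv p) (A.antipode p x) := by
  simp [SB, DFinsupp.lsum_single]

/-- unit of the direct sum -/
noncomputable def oneB : Π₀ p, H p := DFinsupp.single G.one A.one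

lemma hone_rB : ∀ b : Π₀ p, H p, MB A b (oneB A) = b := by
  have : (MB A).flip (oneB A) = LinearMap.id := by
    apply DFinsupp.lhom_ext
    intro p x
    have h1 : A.mul p G.one x A.one = gcl (k := k) (G.mul_one p).symm x := by
      conv_rhs => rw [← A.mul_one' p x]
      rw [gcl_cancel]
    simp only [LinearMap.flip_apply, LinearMap.id_apply, oneB, MB_single, h1, single_gcl]
  intro b
  calc MB A b (oneB A) = (MB A).flip (oneB A) b := rfl
    _ = b := by rw [this]; rfl

lemma hone_lB : ∀ b : Π₀ p, H p, MB A (oneB A) b = b := by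
  have : MB A (oneB A) = LinearMap.id := by
    apply DFinsupp.lhom_ext
    intro p x
    have h1 : A.mul G.one p A.one x = gcl (k := k) (G.one_mul p).symm x := by
      conv_rhs => rw [← A.one_mul' p x]
      rw [gcl_cancel]
    simp only [LinearMap.id_apply, oneB, MB_single, h1, single_gcl]
  intro b
  rw [this]; rfl

lemma hc1B : Coalgebra.comul (R := k) (oneB A) = oneB A ⊗ₜ[k] oneB A := by
  simp [oneB, DFinsupp.comul_single, A.comul_one]

lemma counitB_single {p : Q} (x : H p) :
    Coalgebra.counit (R := k) (DFinsupp.single p x) = Coalgebra.counit (R := k) x :=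
  DFinsupp.counit_single k Q H p x

lemma hcmB : ∀ a b : Π₀ p, H p,
    Coalgebra.comul (R := k) (MB A a b) = m2 (MB A) (Coalgebra.comul a) (Coalgebra.comul b) := by
  have key : (MB A).compr₂ (Coalgebra.comul (R := k))
      = (m2 (MB A)).compl₁₂ (Coalgebra.comul (R := k)) (Coalgebra.comul (R := k)) := by
    apply DFinsupp.lhom_ext
    intro p x
    apply DFinsupp.lhom_ext
    intro q y
    simp only [LinearMap.compr₂_apply, LinearMap.compl₁₂_apply, MB_single,
      DFinsupp.comul_single]
    rw [A.comul_mul p q x y]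
    generalize Coalgebra.comul (R := k) x = t
    generalize Coalgebra.comul (R := k) y = u
    induction t using TensorProduct.induction_on with
    | zero => simp
    | add t₁ t₂ h₁ h₂ => simp only [map_add, add_tmul, LinearMap.add_apply, h₁, h₂]
    | tmul x₁ x₂ =>
      induction u using TensorProduct.induction_on with
      | zero => simp
      | add u₁ u₂ h₁ h₂ => simp only [map_add, tmul_add, LinearMap.add_apply, h₁, h₂]
      | tmul y₁ y₂ => simp
  intro a b
  calc Coalgebra.comul (R := k) (MB A a b) = ((MB A).compr₂ (Coalgebra.comul (R := k))) a b := rfl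
    _ = m2 (MB A) (Coalgebra.comul a) (Coalgebra.comul b) := by rw [key]; rfl

include k in
lemma single_sum {ι' : Type*} (s : Finset ι') {c : Q} (f : ι' → H c) :
    ∑ i ∈ s, (DFinsupp.single c (f i) : Π₀ p, H p) = DFinsupp.single c (∑ i ∈ s, f i) :=
  (map_sum (DFinsupp.lsingle c : H c →ₗ[k] Π₀ p, H p) f s).symm

lemma hax1B {ι : Type*} : ∀ (a g : Π₀ p, H p) (r : Coalgebra.Repr k a ι),
    ∑ i ∈ r.index, MB A (SB A (r.left i)) (MB A (r.right i) g)
      = Coalgebra.counit (R := k) a • g := by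
  have key : (TensorProduct.lift (MB A)) ∘ₗ
        (TensorProduct.map (SB A) (TensorProduct.lift (MB A))) ∘ₗ
        (TensorProduct.assoc k _ _ _).toLinearMap ∘ₗ
        ((Coalgebra.comul (R := k)).rTensor (Π₀ p, H p))
      = (TensorProduct.lid k _).toLinearMap ∘ₗ
        ((Coalgebra.counit (R := k)).rTensor (Π₀ p, H p)) := by
    apply TensorProduct.ext
    apply DFinsupp.lhom_ext; intro p x
    apply DFinsupp.lhom_ext; intro q y
    simp only [LinearMap.compr₂_apply, LinearMap.compr₂ₛₗ_apply, TensorProduct.mk_apply, LinearMap.comp_apply,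
      LinearMap.rTensor_tmul, LinearEquiv.coe_coe, DFinsupp.comul_single,
      DFinsupp.counit_single, TensorProduct.lid_tmul]
    have hax := A.antipode_mul_left p q x y
    rw [← (ℛ k x).eq] at hax ⊢
    simp only [map_sum, TensorProduct.sum_tmul, TensorProduct.map_tmul,
      TensorProduct.assoc_tmul, TensorProduct.lift.tmul, LinearMap.sum_apply,
      LinearMap.compl₂_apply, LinearMap.comp_apply, LinearMap.flip_apply] at hax ⊢
    simp only [DFinsupp.lsingle_apply, MB_single, SB_single]
    rw [single_sum (k := k), hax]
    simp only [single_gcl, DFinsupp.single_smul]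
  intro a g r
  have happ := LinearMap.congr_fun key (a ⊗ₜ[k] g)
  simp only [LinearMap.comp_apply, LinearMap.rTensor_tmul, LinearEquiv.coe_coe,
    TensorProduct.lid_tmul] at happ
  rw [← r.eq] at happ
  simp only [map_sum, TensorProduct.sum_tmul, TensorProduct.map_tmul,
    TensorProduct.assoc_tmul, TensorProduct.lift.tmul, LinearMap.sum_apply] at happ
  exact happ

lemma hax2B {ι : Type*} : ∀ (a g : Π₀ p, H p) (r : Coalgebra.Repr k a ι),
    ∑ i ∈ r.index, MB A (r.left i) (MB A (SB A (r.right i)) g)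
      = Coalgebra.counit (R := k) a • g := by
  have key : (TensorProduct.lift (MB A)) ∘ₗ
        (LinearMap.lTensor (Π₀ p, H p)
          ((TensorProduct.lift (MB A)) ∘ₗ ((SB A).rTensor (Π₀ p, H p)))) ∘ₗ
        (TensorProduct.assoc k _ _ _).toLinearMap ∘ₗ
        ((Coalgebra.comul (R := k)).rTensor (Π₀ p, H p))
      = (TensorProduct.lid k _).toLinearMap ∘ₗ
        ((Coalgebra.counit (R := k)).rTensor (Π₀ p, H p)) := by
    apply TensorProduct.ext
    apply DFinsupp.lhom_ext; intro p x
    apply DFinsupp.lhom_ext; intro q y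
    simp only [LinearMap.compr₂_apply, LinearMap.compr₂ₛₗ_apply, TensorProduct.mk_apply, LinearMap.comp_apply,
      LinearMap.rTensor_tmul, LinearEquiv.coe_coe, DFinsupp.comul_single,
      DFinsupp.counit_single, TensorProduct.lid_tmul]
    have hax := A.antipode_mul_left' p q x y
    rw [← (ℛ k x).eq] at hax ⊢
    simp only [map_sum, TensorProduct.sum_tmul, TensorProduct.map_tmul,
      TensorProduct.assoc_tmul, TensorProduct.lift.tmul, LinearMap.sum_apply,
      LinearMap.lTensor_tmul, LinearMap.rTensor_tmul,
      LinearMap.compl₂_apply, LinearMap.comp_apply, LinearMap.flip_apply] at hax ⊢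
    simp only [DFinsupp.lsingle_apply, MB_single, SB_single]
    rw [single_sum (k := k), hax]
    simp only [single_gcl, DFinsupp.single_smul]
  intro a g r
  have happ := LinearMap.congr_fun key (a ⊗ₜ[k] g)
  simp only [LinearMap.comp_apply, LinearMap.rTensor_tmul, LinearEquiv.coe_coe,
    TensorProduct.lid_tmul] at happ
  rw [← r.eq] at happ
  simp only [map_sum, TensorProduct.sum_tmul, TensorProduct.map_tmul,
    TensorProduct.assoc_tmul, TensorProduct.lift.tmul, LinearMap.sum_apply,
    LinearMap.lTensor_tmul, LinearMap.rTensor_tmul, LinearMap.comp_apply] at happ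
  exact happ

lemma hax4B {ι : Type*} : ∀ (a g : Π₀ p, H p) (r : Coalgebra.Repr k a ι),
    ∑ i ∈ r.index, MB A (MB A g (r.left i)) (SB A (r.right i))
      = Coalgebra.counit (R := k) a • g := by
  have key : (TensorProduct.lift (MB A)) ∘ₗ
        (TensorProduct.map (TensorProduct.lift (MB A)) (SB A)) ∘ₗ
        (TensorProduct.assoc k _ _ _).symm.toLinearMap ∘ₗ
        ((Coalgebra.comul (R := k)).lTensor (Π₀ p, H p)) ∘ₗ
        (TensorProduct.comm k _ _).toLinearMap
      = (TensorProduct.lid k _).toLinearMap ∘ₗ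
        ((Coalgebra.counit (R := k)).rTensor (Π₀ p, H p)) := by
    apply TensorProduct.ext
    apply DFinsupp.lhom_ext; intro p x
    apply DFinsupp.lhom_ext; intro q y
    simp only [LinearMap.compr₂_apply, LinearMap.compr₂ₛₗ_apply, TensorProduct.mk_apply, LinearMap.comp_apply,
      LinearMap.rTensor_tmul, LinearMap.lTensor_tmul, LinearEquiv.coe_coe,
      TensorProduct.comm_tmul, DFinsupp.comul_single,
      DFinsupp.counit_single, TensorProduct.lid_tmul]
    have hax := A.antipode_mul_right' p q x y
    rw [← (ℛ k x).eq] at hax ⊢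
    simp only [map_sum, TensorProduct.sum_tmul, TensorProduct.tmul_sum,
      TensorProduct.map_tmul, TensorProduct.assoc_symm_tmul, TensorProduct.lift.tmul,
      LinearMap.sum_apply, LinearMap.compl₂_apply, LinearMap.comp_apply] at hax ⊢
    simp only [DFinsupp.lsingle_apply, MB_single, SB_single]
    rw [single_sum (k := k), hax]
    simp only [single_gcl, DFinsupp.single_smul]
  intro a g r
  have happ := LinearMap.congr_fun key (a ⊗ₜ[k] g)
  simp only [LinearMap.comp_apply, LinearMap.rTensor_tmul, LinearMap.lTensor_tmul,
    LinearEquiv.coe_coe, TensorProduct.comm_tmul, TensorProduct.lid_tmul] at happ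
  rw [← r.eq] at happ
  simp only [map_sum, TensorProduct.sum_tmul, TensorProduct.tmul_sum,
    TensorProduct.map_tmul, TensorProduct.assoc_symm_tmul, TensorProduct.lift.tmul,
    LinearMap.sum_apply] at happ
  exact happ

lemma hS2B {ι : Type*} : ∀ (a : Π₀ p, H p) (r : Coalgebra.Repr k a ι),
    ∑ i ∈ r.index, MB A (r.left i) (SB A (r.right i))
      = Coalgebra.counit (R := k) a • oneB A := by
  intro a r
  have h := hax4B A a (oneB A) r
  simp only [hone_lB] at h
  exact h

@[simp] lemma applyl_apply {M N : Type*} [AddCommGroup M] [AddCommGroup N] [Module k M]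
    [Module k N] (v : M) (f : M →ₗ[k] N) : LinearMap.applyₗ (R := k) v f = f v := rfl

lemma delta0_repr (hassoc : ∀ a b c, G.mul (G.mul a b) c = G.mul a (G.mul b c))
    (p q r' : Q) (x : H p) (b : H q) (c : H r')
    {ι₁ ι₂ ι₃ : Type*} (rx : Coalgebra.Repr k x ι₁) (rb : Coalgebra.Repr k b ι₂)
    (rc : Coalgebra.Repr k c ι₃) :
    delta0 A hassoc p q r' x b c
    = ∑ j ∈ rx.index, ∑ s ∈ rb.index, ∑ t ∈ rc.index,
        gcl (k := k)
          (show G.mul (G.mul (G.mul p q) r') (G.inv (G.mul p (G.mul q r'))) = G.one by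
            rw [hassoc p q r']; exact G.mul_inv_self _)
          (A.mul _ _
            (A.mul (G.mul p q) r' (A.mul p q (rx.left j) (rb.left s)) (rc.left t))
            (A.antipode (G.mul p (G.mul q r'))
              (A.mul p (G.mul q r') (rx.right j) (A.mul q r' (rb.right s) (rc.right t))))) := by
  simp only [delta0, LinearMap.comp_apply, TensorProduct.lcurry_apply,
    TensorProduct.curry_apply, comul3, mulLeft, mulRight, mm, LinearEquiv.coe_coe,
    TensorProduct.map_tmul]
  rw [← rx.eq, ← rb.eq, ← rc.eq]
  simp only [TensorProduct.sum_tmul, TensorProduct.tmul_sum, map_sum,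
    TensorProduct.tensorTensorTensorComm_tmul, LinearMap.lTensor_tmul,
    TensorProduct.map_tmul, TensorProduct.assoc_symm_tmul, TensorProduct.lift.tmul,
    LinearMap.comp_apply, LinearMap.id_coe, id_eq, LinearEquiv.coe_coe]
  refine (Finset.sum_comm).trans ?_
  refine (Finset.sum_congr rfl fun s _ => Finset.sum_comm).trans ?_
  exact Finset.sum_comm

/-- transport a graded `Repr` to the direct sum -/
noncomputable def mapRepr (p : Q) (x : H p) {ι : Type*} (r : Coalgebra.Repr k x ι) :
    Coalgebra.Repr k (DFinsupp.single p x : Π₀ p, H p) ι where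
  index := r.index
  left := fun i => DFinsupp.single p (r.left i)
  right := fun i => DFinsupp.single p (r.right i)
  eq := by
    rw [DFinsupp.comul_single, ← r.eq, map_sum]
    simp

@[simp] lemma mapRepr_index (p : Q) (x : H p) {ι : Type*} (r : Coalgebra.Repr k x ι) :
    (mapRepr (k := k) (H := H) p x r).index = r.index := rfl
@[simp] lemma mapRepr_left (p : Q) (x : H p) {ι : Type*} (r : Coalgebra.Repr k x ι) (i) :
    (mapRepr (k := k) (H := H) p x r).left i = DFinsupp.single p (r.left i) := rfl
@[simp] lemma mapRepr_right (p : Q) (x : H p) {ι : Type*} (r : Coalgebra.Repr k x ι) (i) :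
    (mapRepr (k := k) (H := H) p x r).right i = DFinsupp.single p (r.right i) := rfl

/-- transport a graded `Repr` of `S x` to the direct sum -/
noncomputable def mapReprS (p : Q) (x : H p) {ι : Type*} (r : Coalgebra.Repr k (A.antipode p x) ι) :
    Coalgebra.Repr k (SB A (DFinsupp.single p x)) ι where
  index := r.index
  left := fun i => DFinsupp.single (G.inv p) (r.left i)
  right := fun i => DFinsupp.single (G.inv p) (r.right i)
  eq := by
    rw [SB_single, DFinsupp.comul_single, ← r.eq, map_sum]
    simp

@[simp] lemma mapReprS_index (p : Q) (x : H p) {ι : Type*} (r : Coalgebra.Repr k (A.antipode p x) ι) :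
    (mapReprS A p x r).index = r.index := rfl
@[simp] lemma mapReprS_left (p : Q) (x : H p) {ι : Type*} (r : Coalgebra.Repr k (A.antipode p x) ι) (i) :
    (mapReprS A p x r).left i = DFinsupp.single (G.inv p) (r.left i) := rfl
@[simp] lemma mapReprS_right (p : Q) (x : H p) {ι : Type*} (r : Coalgebra.Repr k (A.antipode p x) ι) (i) :
    (mapReprS A p x r).right i = DFinsupp.single (G.inv p) (r.right i) := rfl

end Transfer

/-- `δ(h₁, S_p(h₂), g) = ε_p(h) ε_q(g) 1`. -/
theorem gradedHopfQuasigroup_associator_antipode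
    (hassoc : ∀ a b c, G.mul (G.mul a b) c = G.mul a (G.mul b c))
    (p q : Q) (h : H p) (g : H q) :
    TensorProduct.lift
        (((delta0 A hassoc p (G.inv p) q).compl₂ (A.antipode p)).compr₂
          (LinearMap.applyₗ g))
        (Coalgebra.comul h)
      = (Coalgebra.counit (R := k) h * Coalgebra.counit (R := k) g) • A.one := by
  classical
  rw [← HQGcore.sum_bilin (((delta0 A hassoc p (G.inv p) q).compl₂ (A.antipode p)).compr₂
      (LinearMap.applyₗ g)) (ℛ k h)]
  apply DFinsupp.single_injective (i := G.one)
  have hmain := HQGcore.main_core (MB A) (SB A) (oneB A) (hone_rB A) (hone_lB A) (hcmB A)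
      (hc1B A) (hax1B A) (hax2B A) (hS2B A)
      (DFinsupp.single p h) (DFinsupp.single q g)
      (mapRepr p h (ℛ k h))
      (fun i => mapRepr p ((ℛ k h).left i) (ℛ k ((ℛ k h).left i)))
      (fun i => mapReprS A p ((ℛ k h).right i) (ℛ k (A.antipode p ((ℛ k h).right i))))
      (mapRepr q g (ℛ k g))
  simp only [mapRepr_index, mapRepr_left, mapRepr_right, mapReprS_index, mapReprS_left,
    mapReprS_right, MB_single, SB_single, DFinsupp.counit_single] at hmain
  have hL : DFinsupp.single G.one (∑ i ∈ (ℛ k h).index,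
      ((((delta0 A hassoc p (G.inv p) q).compl₂ (A.antipode p)).compr₂
        (LinearMap.applyₗ g)) ((ℛ k h).left i)) ((ℛ k h).right i))
      = ∑ i ∈ (ℛ k h).index, ∑ j ∈ (ℛ k ((ℛ k h).left i)).index,
          ∑ s ∈ (ℛ k (A.antipode p ((ℛ k h).right i))).index, ∑ t ∈ (ℛ k g).index,
          DFinsupp.single (G.mul (G.mul (G.mul p (G.inv p)) q)
              (G.inv (G.mul p (G.mul (G.inv p) q))))
            (A.mul _ _
              (A.mul (G.mul p (G.inv p)) q
                (A.mul p (G.inv p) ((ℛ k ((ℛ k h).left i)).left j)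
                  ((ℛ k (A.antipode p ((ℛ k h).right i))).left s)) ((ℛ k g).left t))
              (A.antipode (G.mul p (G.mul (G.inv p) q))
                (A.mul p (G.mul (G.inv p) q) ((ℛ k ((ℛ k h).left i)).right j)
                  (A.mul (G.inv p) q ((ℛ k (A.antipode p ((ℛ k h).right i))).right s)
                    ((ℛ k g).right t))))) := by
    rw [← single_sum (k := k)]
    refine Finset.sum_congr rfl fun i _ => ?_
    simp only [LinearMap.compr₂_apply, LinearMap.compl₂_apply, applyl_apply]
    rw [delta0_repr A hassoc p (G.inv p) q ((ℛ k h).left i) (A.antipode p ((ℛ k h).right i)) g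
        (ℛ k ((ℛ k h).left i)) (ℛ k (A.antipode p ((ℛ k h).right i))) (ℛ k g)]
    simp only [← single_sum (k := k)]
    simp only [single_gcl]
  rw [hL, DFinsupp.single_smul]
  exact hmain
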